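/- There is a polynomial p such that every purely implicational formula ρ valid in minimal logic has a quasi-polynomial tree-like proof in NM→, i.e. a tree-like NM→ proof ∂ of ρ with h(∂) + φ(∂) ≤ p(|ρ|). -/
import Mathlib


/-- Purely implicational formulas: built from propositional variables by `→`. -/
inductive Fml : Type
  | var : ℕ → Fml
  | imp : Fml → Fml → Fml
deriving DecidableEq

namespace Fml

/-- The weight of a formula: its total number of symbols. -/
def weight : Fml → ℕ
  | var _ => 1
  | imp a b => weight a + weight b + 1

/-- The (reflexive) subformula relation. -/
inductive Sub : Fml → Fml → Prop
  | refl (φ : Fml) : Sub φ φ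
  | impL {φ a b : Fml} : Sub φ a → Sub φ (imp a b)
  | impR {φ a b : Fml} : Sub φ b → Sub φ (imp a b)

/-- The antecedent of an implication (junk value on variables). -/
def antecedent : Fml → Fml
  | var n => var n
  | imp a _ => a

end Fml

/-- Tree-like natural deductions (with possible repetition nodes, i.e. NM→⁺-trees). -/
inductive DT : Type
  | leaf (φ : Fml)
  | impI (α β : Fml) (t : DT)
  | impE (α β : Fml) (t₁ t₂ : DT)
  | rep (φ : Fml) (ts : List DT)

namespace DT

/-- The formula labelling the root of a deduction tree. -/
def label : DT → Fml
  | leaf φ => φ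
  | impI α β _ => .imp α β
  | impE _ β _ _ => β
  | rep φ _ => φ

/-- Local correctness of a deduction tree w.r.t. the rules (→I), (→E), (R)ₙ (n ≥ 1). -/
inductive Correct : DT → Prop
  | leaf (φ : Fml) : Correct (leaf φ)
  | impI {α β : Fml} {t : DT} : t.label = β → Correct t → Correct (impI α β t)
  | impE {α β : Fml} {t₁ t₂ : DT} : t₁.label = α → t₂.label = .imp α β →
      Correct t₁ → Correct t₂ → Correct (impE α β t₁ t₂)
  | rep {φ : Fml} {ts : List DT} : ts ≠ [] → (∀ t ∈ ts, label t = φ) →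
      (∀ t ∈ ts, Correct t) → Correct (rep φ ts)

/-- A deduction lies in NM→ iff it uses no repetition rule. -/
inductive RepFree : DT → Prop
  | leaf (φ : Fml) : RepFree (leaf φ)
  | impI {α β : Fml} {t : DT} : RepFree t → RepFree (impI α β t)
  | impE {α β : Fml} {t₁ t₂ : DT} : RepFree t₁ → RepFree t₂ → RepFree (impE α β t₁ t₂)

/-- `ClosedUnder D t` : every deductive path of `t` from a leaf labelled `α` to the
root of `t` either contains the conclusion of an (→I)-inference discharging `α`, or
`α ∈ D` (the formulas discharged strictly below `t`).  With `D = ∅` this says that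
every deductive path of `t` is closed. -/
inductive ClosedUnder : Set Fml → DT → Prop
  | leaf {D : Set Fml} {φ : Fml} : φ ∈ D → ClosedUnder D (leaf φ)
  | impI {D : Set Fml} {α β : Fml} {t : DT} :
      ClosedUnder (insert α D) t → ClosedUnder D (impI α β t)
  | impE {D : Set Fml} {α β : Fml} {t₁ t₂ : DT} :
      ClosedUnder D t₁ → ClosedUnder D t₂ → ClosedUnder D (impE α β t₁ t₂)
  | rep {D : Set Fml} {φ : Fml} {ts : List DT} :
      (∀ t ∈ ts, ClosedUnder D t) → ClosedUnder D (rep φ ts)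

/-- The height of a deduction tree. -/
def height : DT → ℕ
  | leaf _ => 0
  | impI _ _ t => height t + 1
  | impE _ _ t₁ t₂ => max (height t₁) (height t₂) + 1
  | rep _ ts => (ts.attach.map fun t => height t.1).foldr max 0 + 1
decreasing_by
  all_goals simp_wf
  all_goals try have := List.sizeOf_lt_of_mem t.2
  all_goals omega

/-- The set of distinct formulas occurring in a deduction tree. -/
def formulas : DT → Finset Fml
  | leaf φ => {φ}
  | impI α β t => insert (.imp α β) (formulas t)
  | impE _ β t₁ t₂ => insert β (formulas t₁ ∪ formulas t₂)
  | rep φ ts => insert φ ((ts.attach.map fun t => formulas t.1).foldr (· ∪ ·) ∅)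
decreasing_by
  all_goals simp_wf
  all_goals try have := List.sizeOf_lt_of_mem t.2
  all_goals omega

/-- `φ(∂)`: the total weight of the set of distinct formulas occurring in `∂`. -/
def phi (t : DT) : ℕ := (t.formulas).sum Fml.weight

/-- The depths (= heights in the tree) of the leaves of a deduction tree. -/
def leafDepths : DT → List ℕ
  | leaf _ => [0]
  | impI _ _ t => (leafDepths t).map (· + 1)
  | impE _ _ t₁ t₂ => (leafDepths t₁ ++ leafDepths t₂).map (· + 1)
  | rep _ ts => ((ts.attach.map fun t => leafDepths t.1).flatten).map (· + 1)
decreasing_by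
  all_goals simp_wf
  all_goals try have := List.sizeOf_lt_of_mem t.2
  all_goals omega

/-- All leaves (top nodes) of the deduction have the same height. -/
def UniformLeaves (t : DT) : Prop := ∀ d ∈ t.leafDepths, d = t.height

/-- `t` is a tree-like NM→ proof of `ρ` : a locally correct, repetition-free tree
with conclusion `ρ`, all of whose deductive paths are closed. -/
def IsProofNM (t : DT) (ρ : Fml) : Prop :=
  t.RepFree ∧ t.Correct ∧ t.ClosedUnder ∅ ∧ t.label = ρ

/-- `t` is a tree-like NM→⁺ proof of `ρ`. -/
def IsProofNMPlus (t : DT) (ρ : Fml) : Prop :=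
  t.Correct ∧ t.ClosedUnder ∅ ∧ t.label = ρ

end DT

/-- `ρ` is valid in minimal logic iff it has a tree-like NM→ proof. -/
def MinValid (ρ : Fml) : Prop := ∃ t : DT, t.IsProofNM ρ
namespace QPaux

open Fml

/-- Subformula closure as a finset. -/
def subF : Fml → Finset Fml
  | .var n => {.var n}
  | .imp a b => insert (.imp a b) (subF a ∪ subF b)

lemma self_mem_subF (φ : Fml) : φ ∈ subF φ := by
  cases φ <;> simp [subF]

lemma subF_closed {a b ρ : Fml} (h : Fml.imp a b ∈ subF ρ) :
    a ∈ subF ρ ∧ b ∈ subF ρ := by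
  induction ρ with
  | var n => simp [subF] at h
  | imp x y ihx ihy =>
    simp only [subF, Finset.mem_insert, Finset.mem_union] at h ⊢
    rcases h with h | h | h
    · obtain ⟨rfl, rfl⟩ : a = x ∧ b = y := by
        constructor <;> injection h <;> assumption
      exact ⟨Or.inr (Or.inl (self_mem_subF a)), Or.inr (Or.inr (self_mem_subF b))⟩
    · exact ⟨Or.inr (Or.inl (ihx h).1), Or.inr (Or.inl (ihx h).2)⟩
    · exact ⟨Or.inr (Or.inr (ihy h).1), Or.inr (Or.inr (ihy h).2)⟩

lemma weight_le_of_mem_subF {σ ρ : Fml} (h : σ ∈ subF ρ) : σ.weight ≤ ρ.weight := by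
  induction ρ with
  | var n => simp [subF] at h; subst h; exact le_refl _
  | imp x y ihx ihy =>
    simp only [subF, Finset.mem_insert, Finset.mem_union] at h
    have hw : (Fml.imp x y).weight = x.weight + y.weight + 1 := rfl
    rcases h with rfl | h | h
    · exact le_refl _
    · exact le_trans (ihx h) (by omega)
    · exact le_trans (ihy h) (by omega)

lemma card_subF_le_weight (ρ : Fml) : (subF ρ).card ≤ ρ.weight := by
  induction ρ with
  | var n => simp [subF, Fml.weight]
  | imp x y ihx ihy =>
    calc (subF (.imp x y)).card ≤ ((subF x ∪ subF y).card) + 1 := Finset.card_insert_le _ _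
    _ ≤ ((subF x).card + (subF y).card) + 1 := by
        exact Nat.add_le_add_right (Finset.card_union_le _ _) 1
    _ ≤ x.weight + y.weight + 1 := by omega
    _ = (Fml.imp x y).weight := rfl

/-- Provability restricted to a subformula-closed finset `S`. -/
inductive Sat (S : Finset Fml) : Finset Fml → Fml → Prop
  | base {Γ σ} : σ ∈ Γ → Sat S Γ σ
  | mp {Γ α β} : (Fml.imp α β) ∈ S → Sat S Γ (.imp α β) → Sat S Γ α → Sat S Γ β
  | intro {Γ α β} : (Fml.imp α β) ∈ S → Sat S (insert α Γ) β → Sat S Γ (.imp α β)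

lemma satMono {S Γ σ} (h : Sat S Γ σ) : ∀ {Γ' : Finset Fml}, Γ ⊆ Γ' → Sat S Γ' σ := by
  induction h with
  | base h => exact fun hs => .base (hs h)
  | mp hS _ _ ih1 ih2 => exact fun hs => .mp hS (ih1 hs) (ih2 hs)
  | intro hS _ ih => exact fun hs => .intro hS (ih (Finset.insert_subset_insert _ hs))

/-- Forcing in the canonical model whose worlds are contexts. -/
def Force (S : Finset Fml) : Fml → Finset Fml → Prop
  | .var n, Γ => Sat S Γ (.var n)
  | .imp a b, Γ => ∀ Δ : Finset Fml, (∀ χ, Sat S Γ χ → Sat S Δ χ) → Force S a Δ → Force S b Δ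

lemma forceMono (S : Finset Fml) :
    ∀ (φ : Fml) (Γ Δ : Finset Fml), (∀ χ, Sat S Γ χ → Sat S Δ χ) →
      Force S φ Γ → Force S φ Δ
  | .var n, Γ, Δ, hle, h => hle _ h
  | .imp a b, Γ, Δ, hle, h =>
      fun Θ hle2 ha => h Θ (fun χ hχ => hle2 χ (hle χ hχ)) ha

lemma truth (S : Finset Fml) (hcl : ∀ {a b : Fml}, Fml.imp a b ∈ S → a ∈ S ∧ b ∈ S) :
    ∀ φ, φ ∈ S → ∀ Γ, Sat S Γ φ ↔ Force S φ Γ := by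
  intro φ
  induction φ with
  | var n => intro _ Γ; exact Iff.rfl
  | imp a b iha ihb =>
    intro hmem Γ
    obtain ⟨ha, hb⟩ := hcl hmem
    constructor
    · intro hs Δ hle hfa
      exact (ihb hb Δ).mp (Sat.mp hmem (hle _ hs) ((iha ha Δ).mpr hfa))
    · intro hf
      refine Sat.intro hmem ((ihb hb _).mpr ?_)
      exact hf (insert a Γ) (fun χ hχ => satMono hχ (Finset.subset_insert _ _))
        ((iha ha _).mp (Sat.base (Finset.mem_insert_self _ _)))

/-- Soundness of locally correct closed deductions w.r.t. the canonical model. -/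
lemma sound (S : Finset Fml) {t : DT} (hC : t.Correct) :
    ∀ (D : Set Fml) (Γ : Finset Fml), t.ClosedUnder D →
      (∀ δ ∈ D, Force S δ Γ) → Force S t.label Γ := by
  induction hC with
  | leaf φ =>
    intro D Γ hcl hD
    cases hcl with
    | leaf hmem => exact hD _ hmem
  | @impI α β t hlab _ ih =>
    intro D Γ hcl hD
    cases hcl with
    | impI hcl' =>
      intro Δ hle hfa
      have := ih (insert α D) Δ hcl' ?_
      · rwa [hlab] at this
      · intro δ hδ
        rcases Set.mem_insert_iff.mp hδ with rfl | hδ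
        · exact hfa
        · exact forceMono S δ Γ Δ hle (hD δ hδ)
  | @impE α β t₁ t₂ hlab₁ hlab₂ _ _ ih₁ ih₂ =>
    intro D Γ hcl hD
    cases hcl with
    | impE hcl₁ hcl₂ =>
      have h₂ := ih₂ D Γ hcl₂ hD
      have h₁ := ih₁ D Γ hcl₁ hD
      rw [hlab₂] at h₂
      rw [hlab₁] at h₁
      exact h₂ Γ (fun χ h => h) h₁
  | @rep φ ts hne hlab _ ih =>
    intro D Γ hcl hD
    cases hcl with
    | rep hcl' =>
      obtain ⟨t₀, ht₀⟩ := List.exists_mem_of_ne_nil ts hne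
      have := ih t₀ ht₀ D Γ (hcl' t₀ ht₀) hD
      rwa [hlab t₀ ht₀] at this

/-- A good deduction: rep-free correct deduction of `σ` from assumptions `Γ`,
of height ≤ `h`, using only formulas from `F`. -/
def Good (F Γ : Finset Fml) (σ : Fml) (h : ℕ) : Prop :=
  ∃ t : DT, t.RepFree ∧ t.Correct ∧ t.ClosedUnder ↑Γ ∧ t.label = σ ∧
    t.height ≤ h ∧ t.formulas ⊆ F

lemma good_leaf {F Γ : Finset Fml} {σ : Fml} (hσ : σ ∈ Γ) (hF : σ ∈ F) (h : ℕ) :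
    Good F Γ σ h := by
  refine ⟨.leaf σ, .leaf σ, .leaf σ, .leaf (Finset.mem_coe.mpr hσ), rfl, ?_, ?_⟩
  · simp [DT.height]
  · simp [DT.formulas]; exact hF

end QPaux

namespace QPaux
/-- Every `Sat`-derivable formula lies in `S ∪ Γ`; in particular in `S` when the
context is contained in `S`. -/
lemma satInS {S : Finset Fml} (hcl : ∀ {a b : Fml}, Fml.imp a b ∈ S → a ∈ S ∧ b ∈ S)
    {Γ : Finset Fml} {σ : Fml} (h : Sat S Γ σ) (hΓ : Γ ⊆ S) : σ ∈ S := by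
  induction h with
  | @base Γ' σ' hmem => exact hΓ hmem
  | mp hS _ _ _ _ => exact (hcl hS).2
  | intro hS _ _ => exact hS
end QPaux
namespace QPaux

/-- One cheap step: either `σ` is already an assumption, or some new member of `S`
is derivable from `Γ` by a short deduction. -/
lemma stepA {S F : Finset Fml} (hSF : S ⊆ F)
    (hcl : ∀ {a b : Fml}, Fml.imp a b ∈ S → a ∈ S ∧ b ∈ S) (k : ℕ)
    (IH : ∀ Γ' : Finset Fml, Γ' ⊆ S → S.card ≤ Γ'.card + k →
      ∀ σ, Sat S Γ' σ → Good F Γ' σ (2*k)) :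
    ∀ {Γ : Finset Fml} {σ : Fml}, Sat S Γ σ → Γ ⊆ S → S.card ≤ Γ.card + (k+1) →
      σ ∈ Γ ∨ ∃ τ, τ ∈ S ∧ τ ∉ Γ ∧ Sat S Γ τ ∧ Good F Γ τ (2*k+1) := by
  intro Γ σ hsat
  induction hsat with
  | @base Γ' σ' h => exact fun _ _ => Or.inl h
  | @mp Γ' α β hS h1 h2 ih1 ih2 =>
    intro hΓS hcard
    rcases ih2 hΓS hcard with hα | cheap
    · rcases ih1 hΓS hcard with himp | cheap
      · by_cases hβ : β ∈ Γ'
        · exact Or.inl hβ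
        · refine Or.inr ⟨β, (hcl hS).2, hβ, Sat.mp hS h1 h2, ?_⟩
          refine ⟨.impE α β (.leaf α) (.leaf (.imp α β)),
            .impE (.leaf α) (.leaf _), .impE rfl rfl (.leaf α) (.leaf _),
            .impE (.leaf (Finset.mem_coe.mpr hα)) (.leaf (Finset.mem_coe.mpr himp)),
            rfl, ?_, ?_⟩
          · simp [DT.height]
          · intro x hx
            simp [DT.formulas] at hx
            rcases hx with rfl | rfl | rfl
            · exact hSF ((hcl hS).2)
            · exact hSF (hΓS hα)
            · exact hSF hS
      · exact Or.inr cheap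
    · exact Or.inr cheap
  | @intro Γ' α β hS hprem ih =>
    intro hΓS hcard
    by_cases hmem : Fml.imp α β ∈ Γ'
    · exact Or.inl hmem
    · by_cases hα : α ∈ Γ'
      · -- insert α Γ' = Γ'
        have hins : insert α Γ' = Γ' := Finset.insert_eq_self.mpr hα
        rw [hins] at ih
        rcases ih hΓS hcard with hβ | cheap
        · refine Or.inr ⟨.imp α β, hS, hmem, Sat.intro hS hprem, ?_⟩
          refine ⟨.impI α β (.leaf β), .impI (.leaf β), .impI rfl (.leaf β),
            .impI (.leaf (Set.mem_insert_iff.mpr (Or.inr (Finset.mem_coe.mpr hβ)))),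
            rfl, ?_, ?_⟩
          · simp [DT.height]
          · intro x hx
            simp [DT.formulas] at hx
            rcases hx with rfl | rfl
            · exact hSF hS
            · exact hSF (hΓS hβ)
        · exact Or.inr cheap
      · -- genuinely new assumption: use the main IH at the larger context
        have hsub : insert α Γ' ⊆ S := Finset.insert_subset ((hcl hS).1) hΓS
        have hcard' : S.card ≤ (insert α Γ').card + k := by
          rw [Finset.card_insert_of_notMem hα]; omega
        obtain ⟨t, hrf, hco, hclo, hlab, hht, hfs⟩ :=
          IH (insert α Γ') hsub hcard' β hprem
        refine Or.inr ⟨.imp α β, hS, hmem, Sat.intro hS hprem, ?_⟩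
        refine ⟨.impI α β t, .impI hrf, .impI hlab hco, ?_, rfl, ?_, ?_⟩
        · exact .impI (by rw [← Finset.coe_insert]; exact hclo)
        · simp only [DT.height]; omega
        · intro x hx
          simp only [DT.formulas, Finset.mem_insert] at hx
          rcases hx with rfl | hx
          · exact hSF hS
          · exact hfs hx

/-- Main extraction: anything derivable in `Sat` has a short good deduction. -/
lemma mainExtract {S F : Finset Fml} (hSF : S ⊆ F)
    (hcl : ∀ {a b : Fml}, Fml.imp a b ∈ S → a ∈ S ∧ b ∈ S)
    (himp : ∀ {a b : Fml}, a ∈ S → b ∈ S → Fml.imp a b ∈ F) :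
    ∀ (k : ℕ) (Γ : Finset Fml), Γ ⊆ S → S.card ≤ Γ.card + k →
      ∀ σ, σ ∈ S → Sat S Γ σ → Good F Γ σ (2*k) := by
  intro k
  induction k with
  | zero =>
    intro Γ hΓS hcard σ hσS _
    have : Γ = S := Finset.eq_of_subset_of_card_le hΓS (by omega)
    exact good_leaf (this ▸ hσS) (hSF hσS) 0
  | succ k ihk =>
    intro Γ hΓS hcard σ hσS hsat
    have IH' : ∀ Γ' : Finset Fml, Γ' ⊆ S → S.card ≤ Γ'.card + k →
        ∀ τ, Sat S Γ' τ → Good F Γ' τ (2*k) := by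
      intro Γ' h1 h2 τ hτ
      by_cases hτS : τ ∈ S
      · exact ihk Γ' h1 h2 τ hτS hτ
      · -- τ ∉ S: impossible? Not needed: τ always ∈ S in our uses... but prove anyway
        exact absurd hτ (by intro h; exact hτS (satInS hcl h h1))
    rcases stepA hSF hcl k IH' hsat hΓS hcard with hmem | ⟨τ, hτS, hτΓ, hτsat, t1, hrf1, hco1, hclo1, hlab1, hht1, hfs1⟩
    · exact good_leaf hmem (hSF hσS) _
    · have hsub : insert τ Γ ⊆ S := Finset.insert_subset hτS hΓS
      have hcard' : S.card ≤ (insert τ Γ).card + k := by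
        rw [Finset.card_insert_of_notMem hτΓ]; omega
      obtain ⟨t2, hrf2, hco2, hclo2, hlab2, hht2, hfs2⟩ :=
        ihk (insert τ Γ) hsub hcard' σ hσS (satMono hsat (Finset.subset_insert _ _))
      refine ⟨.impE τ σ t1 (.impI τ σ t2), .impE hrf1 (.impI hrf2),
        .impE hlab1 rfl hco1 (.impI hlab2 hco2),
        .impE hclo1 (.impI (by rw [← Finset.coe_insert]; exact hclo2)), rfl, ?_, ?_⟩
      · simp only [DT.height]; omega
      · intro x hx
        simp only [DT.formulas, Finset.mem_insert, Finset.mem_union] at hx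
        rcases hx with rfl | hx | hx
        · exact hSF hσS
        · exact hfs1 hx
        · rcases hx with rfl | hx
          · exact himp hτS hσS
          · exact hfs2 hx

end QPaux
namespace QPaux

lemma final (ρ : Fml) (hv : MinValid ρ) :
    ∃ t : DT, t.IsProofNM ρ ∧
      t.height + t.phi ≤ 2 * ρ.weight ^ 3 + 2 * ρ.weight ^ 2 + 2 * ρ.weight := by
  classical
  obtain ⟨t0, hrf0, hco0, hclo0, hlab0⟩ := hv
  set n := ρ.weight with hn
  set S : Finset Fml := subF ρ with hSdef
  set F : Finset Fml := S ∪ (S ×ˢ S).image (fun p => Fml.imp p.1 p.2) with hFdef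
  have hcl : ∀ {a b : Fml}, Fml.imp a b ∈ S → a ∈ S ∧ b ∈ S := fun h => subF_closed h
  have hSF : S ⊆ F := Finset.subset_union_left
  have himp : ∀ {a b : Fml}, a ∈ S → b ∈ S → Fml.imp a b ∈ F := by
    intro a b ha hb
    refine Finset.mem_union_right _ (Finset.mem_image.mpr ⟨(a, b), ?_, rfl⟩)
    exact Finset.mem_product.mpr ⟨ha, hb⟩
  -- soundness + truth lemma: ρ is Sat-derivable from the empty context
  have hforce : Force S ρ ∅ := by
    have := sound S hco0 ∅ ∅ hclo0 (fun δ h => absurd h (Set.notMem_empty δ))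
    rwa [hlab0] at this
  have hsat : Sat S (∅ : Finset Fml) ρ :=
    (truth S (fun h => subF_closed h) ρ (self_mem_subF ρ) ∅).mpr hforce
  -- extraction
  obtain ⟨t, hrf, hco, hclo, hlab, hht, hfs⟩ :=
    mainExtract hSF hcl himp S.card ∅ (Finset.empty_subset S) (by simp) ρ
      (self_mem_subF ρ) hsat
  have hclo' : t.ClosedUnder ∅ := by rwa [Finset.coe_empty] at hclo
  refine ⟨t, ⟨hrf, hco, hclo', hlab⟩, ?_⟩
  -- numeric bounds
  have hcardS : S.card ≤ n := card_subF_le_weight ρ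
  have hwS : ∀ x ∈ S, x.weight ≤ n := fun x hx => weight_le_of_mem_subF hx
  have hheight : t.height ≤ 2 * n := le_trans hht (by omega)
  have hphi : t.phi ≤ F.sum Fml.weight := by
    exact Finset.sum_le_sum_of_subset hfs
  have hsum1 : S.sum Fml.weight ≤ S.card * n := by
    have := Finset.sum_le_card_nsmul S Fml.weight n hwS
    simpa [smul_eq_mul] using this
  have hsum2 : ((S ×ˢ S).image (fun p => Fml.imp p.1 p.2)).sum Fml.weight ≤
      (S.card * S.card) * (2 * n + 1) := by
    have hb : ∀ x ∈ (S ×ˢ S).image (fun p => Fml.imp p.1 p.2), x.weight ≤ 2 * n + 1 := by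
      intro x hx
      obtain ⟨⟨a, b⟩, hab, rfl⟩ := Finset.mem_image.mp hx
      obtain ⟨ha, hb'⟩ := Finset.mem_product.mp hab
      have : ((a, b).1.imp (a, b).2).weight = a.weight + b.weight + 1 := rfl
      have h1 := hwS a ha
      have h2 := hwS b hb'
      omega
    have := Finset.sum_le_card_nsmul _ Fml.weight (2 * n + 1) hb
    have hc : ((S ×ˢ S).image (fun p => Fml.imp p.1 p.2)).card ≤ S.card * S.card := by
      calc ((S ×ˢ S).image (fun p => Fml.imp p.1 p.2)).card ≤ (S ×ˢ S).card :=
            Finset.card_image_le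
        _ = S.card * S.card := Finset.card_product S S
    calc ((S ×ˢ S).image (fun p => Fml.imp p.1 p.2)).sum Fml.weight
        ≤ ((S ×ˢ S).image (fun p => Fml.imp p.1 p.2)).card * (2 * n + 1) := by
          simpa [smul_eq_mul] using this
      _ ≤ (S.card * S.card) * (2 * n + 1) := Nat.mul_le_mul_right _ hc
  have hFsum : F.sum Fml.weight ≤ S.card * n + (S.card * S.card) * (2 * n + 1) := by
    have hui := Finset.sum_union_inter (s₁ := S)
      (s₂ := (S ×ˢ S).image (fun p => Fml.imp p.1 p.2)) (f := Fml.weight)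
    have e1 : F.sum Fml.weight = ∑ x ∈ S ∪ (S ×ˢ S).image (fun p => Fml.imp p.1 p.2),
        Fml.weight x := rfl
    have e2 : S.sum Fml.weight = ∑ x ∈ S, Fml.weight x := rfl
    have e3 : ((S ×ˢ S).image (fun p => Fml.imp p.1 p.2)).sum Fml.weight
        = ∑ x ∈ (S ×ˢ S).image (fun p => Fml.imp p.1 p.2), Fml.weight x := rfl
    omega
  have : t.phi ≤ n * n + (n * n) * (2 * n + 1) := by
    refine le_trans hphi (le_trans hFsum ?_)
    have h1 : S.card * n ≤ n * n := Nat.mul_le_mul_right n hcardS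
    have h2 : (S.card * S.card) * (2 * n + 1) ≤ (n * n) * (2 * n + 1) :=
      Nat.mul_le_mul_right _ (Nat.mul_le_mul hcardS hcardS)
    omega
  nlinarith [this, hheight]

end QPaux

/-- There is a polynomial `p` such that every purely implicational formula `ρ` valid
in minimal logic has a quasi-polynomial tree-like proof in NM→, i.e. a tree-like NM→
proof `∂` of `ρ` with `h(∂) + φ(∂) ≤ p(|ρ|)`. -/
theorem minValid_has_quasiPolynomial_treeProof :
    ∃ p : Polynomial ℕ, ∀ ρ : Fml, MinValid ρ →
      ∃ t : DT, t.IsProofNM ρ ∧ t.height + t.phi ≤ p.eval ρ.weight := by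
  refine ⟨Polynomial.C 2 * Polynomial.X ^ 3 + Polynomial.C 2 * Polynomial.X ^ 2 +
    Polynomial.C 2 * Polynomial.X, ?_⟩
  intro ρ hv
  obtain ⟨t, h1, h2⟩ := QPaux.final ρ hv
  refine ⟨t, h1, ?_⟩
  simpa [Polynomial.eval_add, Polynomial.eval_mul, Polynomial.eval_pow] using h2
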